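/- Let a, b, c, d ≥ 1 be integers and let M be the 4×4 integer matrix with diagonal entries a, b, c, d and all off-diagonal entries equal to −1. If det M = 0 and two of the diagonal entries equal 7, then the remaining two diagonal entries are 1 and 3 (in some order). -/

import Mathlib

lemma key_11 (x y : ℤ) (hx : 1 ≤ x) (hy : 1 ≤ y) (h : 3 * (x * y) = x + y + 5) :
    (x = 1 ∧ y = 3) ∨ (x = 3 ∧ y = 1) := by
  have hx3 : x ≤ 3 := by nlinarith
  have hy3 : y ≤ 3 := by nlinarith
  interval_cases x <;> interval_cases y <;> omega

theorem stmt_11 (a b c d : ℤ) (ha : 1 ≤ a) (hb : 1 ≤ b) (hc : 1 ≤ c) (hd : 1 ≤ d)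
    (hdet : (!![a, -1, -1, -1;
                -1, b, -1, -1;
                -1, -1, c, -1;
                -1, -1, -1, d]).det = 0)
    (i j : Fin 4) (hij : i ≠ j)
    (hi7 : ![a, b, c, d] i = 7) (hj7 : ![a, b, c, d] j = 7) :
    ∀ k l : Fin 4, k ≠ l → k ≠ i → k ≠ j → l ≠ i → l ≠ j →
      (![a, b, c, d] k = 1 ∧ ![a, b, c, d] l = 3) ∨
      (![a, b, c, d] k = 3 ∧ ![a, b, c, d] l = 1) := by
  have hP : a*b*c*d - a*b - a*c - a*d - b*c - b*d - c*d
      - 2*a - 2*b - 2*c - 2*d - 3 = 0 := by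
    simp +decide [Matrix.det_succ_row_zero, Fin.sum_univ_succ, Matrix.det_fin_three, Fin.succAbove] at hdet
    linarith
  clear hdet
  intro k l hkl hki hkj hli hlj
  fin_cases i <;> fin_cases j <;> fin_cases k <;> fin_cases l <;>
    simp only [Fin.mk_zero, Fin.mk_one, show (⟨2,by omega⟩ : Fin 4) = 2 from rfl,
      show (⟨3,by omega⟩ : Fin 4) = 3 from rfl, Matrix.cons_val_zero, Matrix.cons_val_one,
      Matrix.head_cons, Matrix.cons_val_two, Matrix.tail_cons, Matrix.cons_val_three,
      Matrix.cons_val_fin_one, Fin.isValue] at hi7 hj7 ⊢ <;>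
    first
      | exact absurd rfl hij
      | exact absurd rfl hkl
      | exact absurd rfl hki
      | exact absurd rfl hkj
      | exact absurd rfl hli
      | exact absurd rfl hlj
      | (subst hi7; subst hj7;
         exact key_11 _ _ (by assumption) (by assumption) (by linarith))
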